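/- Let A be an m×n complex matrix of rank r with singular value decomposition A = U₁Σ₁V₁*, and B an m×n complex matrix of rank s with singular value decomposition B = Ũ₁Σ̃₁Ṽ₁*, and let E = B − A. Then ‖Ũ₁*U₂‖_F² = ‖EB†‖_F² − ‖AA†EB†‖_F² and ‖Ṽ₂*V₁‖_F² = ‖A†E‖_F² − ‖A†EB†B‖_F². -/

import Mathlib

open Matrix

/-- The square of the Frobenius norm of a complex matrix. -/
noncomputable def frobSq {α β : Type*} [Fintype α] [Fintype β] (M : Matrix α β ℂ) : ℝ :=
  ∑ i, ∑ j, ‖M i j‖ ^ 2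

/-- The spectral norm (ℓ²-operator norm) of a complex matrix. -/
noncomputable def spec {α β : Type*} [Fintype α] [Fintype β] [DecidableEq β]
    (M : Matrix α β ℂ) : ℝ :=
  ‖LinearMap.toContinuousLinearMap (Matrix.toEuclideanLin M)‖

/-- `X` is the Moore–Penrose inverse of `M` (the four Penrose equations). -/
def IsMoorePenrose {α β : Type*} [Fintype α] [Fintype β]
    (M : Matrix α β ℂ) (X : Matrix β α ℂ) : Prop :=
  M * X * M = M ∧ X * M * X = X ∧ (M * X)ᴴ = M * X ∧ (X * M)ᴴ = X * M

lemma frobSq_eq_re_trace {α β : Type*} [Fintype α] [Fintype β] (M : Matrix α β ℂ) :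
    frobSq M = (Matrix.trace (Mᴴ * M)).re := by
  simp only [frobSq, Matrix.trace, Matrix.diag, Matrix.mul_apply,
    Matrix.conjTranspose_apply, Complex.re_sum]
  rw [Finset.sum_comm]
  refine Finset.sum_congr rfl fun i _ => Finset.sum_congr rfl fun j _ => ?_
  rw [RCLike.star_def, RCLike.conj_mul]; norm_cast

lemma frobSq_conjT {α β : Type*} [Fintype α] [Fintype β] (M : Matrix α β ℂ) :
    frobSq Mᴴ = frobSq M := by
  rw [frobSq_eq_re_trace, frobSq_eq_re_trace, conjTranspose_conjTranspose,
    Matrix.trace_mul_comm]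

lemma frobSq_unit_mul {α β γ : Type*} [Fintype α] [Fintype β] [Fintype γ] [DecidableEq α]
    (Q : Matrix γ α ℂ) (M : Matrix α β ℂ) (hQ : Qᴴ * Q = 1) :
    frobSq (Q * M) = frobSq M := by
  rw [frobSq_eq_re_trace, frobSq_eq_re_trace, conjTranspose_mul, Matrix.mul_assoc,
    ← Matrix.mul_assoc Qᴴ, hQ, Matrix.one_mul]

lemma frobSq_neg {α β : Type*} [Fintype α] [Fintype β] (M : Matrix α β ℂ) :
    frobSq (-M) = frobSq M := by simp [frobSq]

lemma frobSq_proj_sub {α β : Type*} [Fintype α] [Fintype β] (P : Matrix α α ℂ)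
    (M : Matrix α β ℂ) (hP : Pᴴ = P) (hP2 : P * P = P) :
    frobSq (M - P * M) = frobSq M - frobSq (P * M) := by
  have h1 : (P * M)ᴴ * (P * M) = Mᴴ * (P * M) := by
    rw [conjTranspose_mul, hP, Matrix.mul_assoc, ← Matrix.mul_assoc P, hP2]
  have h3 : (P * M)ᴴ * M = Mᴴ * (P * M) := by
    rw [conjTranspose_mul, hP, Matrix.mul_assoc]
  have h2 : (M - P * M)ᴴ * (M - P * M) = Mᴴ * M - Mᴴ * (P * M) := by
    rw [conjTranspose_sub, Matrix.sub_mul, Matrix.mul_sub, Matrix.mul_sub, h1, h3]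
    abel
  rw [frobSq_eq_re_trace, frobSq_eq_re_trace, frobSq_eq_re_trace, h1, h2, trace_sub,
    Complex.sub_re]

lemma frobSq_proj_sub' {α β : Type*} [Fintype α] [Fintype β] (Q : Matrix β β ℂ)
    (M : Matrix α β ℂ) (hQ : Qᴴ = Q) (hQ2 : Q * Q = Q) :
    frobSq (M - M * Q) = frobSq M - frobSq (M * Q) := by
  rw [← frobSq_conjT (M - M * Q), conjTranspose_sub, conjTranspose_mul, hQ,
    ← frobSq_conjT M, ← frobSq_conjT (M * Q), conjTranspose_mul, hQ]
  exact frobSq_proj_sub Q Mᴴ hQ hQ2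

lemma cancel_left {k l p : Type*} [Fintype l] [Fintype k]
    {X : Matrix k l ℂ} {Y : Matrix l k ℂ} [DecidableEq k]
    (h : X * Y = 1) (Z : Matrix k p ℂ) : X * (Y * Z) = Z := by
  rw [← Matrix.mul_assoc, h, Matrix.one_mul]

lemma frobSq_special {k l p q : Type*} [Fintype k] [Fintype l] [Fintype p] [Fintype q]
    [DecidableEq l] [DecidableEq q]
    (P : Matrix k l ℂ) (X : Matrix l q ℂ) (Q : Matrix p q ℂ)
    (hP : Pᴴ * P = 1) (hQ : Qᴴ * Q = 1) :
    frobSq (P * (X * Qᴴ)) = frobSq X := by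
  rw [frobSq_unit_mul P _ hP, ← frobSq_conjT (X * Qᴴ), conjTranspose_mul,
    conjTranspose_conjTranspose, frobSq_unit_mul Q _ hQ, frobSq_conjT]


theorem stmt17 {m n r s : ℕ}
    (A B : Matrix (Fin m) (Fin n) ℂ)
    (hrankA : A.rank = r) (hrankB : B.rank = s)
    (σ : Fin r → ℝ) (hσmono : Antitone σ) (hσpos : ∀ i, 0 < σ i)
    (τ : Fin s → ℝ) (hτmono : Antitone τ) (hτpos : ∀ i, 0 < τ i)
    (U₁ : Matrix (Fin m) (Fin r) ℂ) (U₂ : Matrix (Fin m) (Fin (m - r)) ℂ)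
    (V₁ : Matrix (Fin n) (Fin r) ℂ) (V₂ : Matrix (Fin n) (Fin (n - r)) ℂ)
    (tU₁ : Matrix (Fin m) (Fin s) ℂ) (tU₂ : Matrix (Fin m) (Fin (m - s)) ℂ)
    (tV₁ : Matrix (Fin n) (Fin s) ℂ) (tV₂ : Matrix (Fin n) (Fin (n - s)) ℂ)
    (hU : (fromCols U₁ U₂)ᴴ * fromCols U₁ U₂ = 1
        ∧ fromCols U₁ U₂ * (fromCols U₁ U₂)ᴴ = 1)
    (hV : (fromCols V₁ V₂)ᴴ * fromCols V₁ V₂ = 1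
        ∧ fromCols V₁ V₂ * (fromCols V₁ V₂)ᴴ = 1)
    (htU : (fromCols tU₁ tU₂)ᴴ * fromCols tU₁ tU₂ = 1
        ∧ fromCols tU₁ tU₂ * (fromCols tU₁ tU₂)ᴴ = 1)
    (htV : (fromCols tV₁ tV₂)ᴴ * fromCols tV₁ tV₂ = 1
        ∧ fromCols tV₁ tV₂ * (fromCols tV₁ tV₂)ᴴ = 1)
    (hAsvd : A = U₁ * diagonal (fun i => (σ i : ℂ)) * V₁ᴴ)
    (hBsvd : B = tU₁ * diagonal (fun i => (τ i : ℂ)) * tV₁ᴴ)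
    (E : Matrix (Fin m) (Fin n) ℂ) (hE : E = B - A)
    (Adag Bdag : Matrix (Fin n) (Fin m) ℂ)
    (hAdag : Adag = V₁ * diagonal (fun i => ((σ i : ℂ))⁻¹) * U₁ᴴ)
    (hBdag : Bdag = tV₁ * diagonal (fun i => ((τ i : ℂ))⁻¹) * tU₁ᴴ) :
    frobSq (tU₁ᴴ * U₂) = frobSq (E * Bdag) - frobSq (A * Adag * E * Bdag)
    ∧ frobSq (tV₂ᴴ * V₁) = frobSq (Adag * E) - frobSq (Adag * E * Bdag * B) := by
  -- block identities
  have hU1 := hU.1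
  rw [conjTranspose_fromCols_eq_fromRows_conjTranspose, fromRows_mul_fromCols,
    ← fromBlocks_one] at hU1
  obtain ⟨hU₁₁, -, hU₂₁, hU₂₂⟩ := fromBlocks_inj.mp hU1
  have hU2 := hU.2
  rw [conjTranspose_fromCols_eq_fromRows_conjTranspose, fromCols_mul_fromRows] at hU2
  have hV1 := hV.1
  rw [conjTranspose_fromCols_eq_fromRows_conjTranspose, fromRows_mul_fromCols,
    ← fromBlocks_one] at hV1
  obtain ⟨hV₁₁, -, -, -⟩ := fromBlocks_inj.mp hV1
  have htU1 := htU.1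
  rw [conjTranspose_fromCols_eq_fromRows_conjTranspose, fromRows_mul_fromCols,
    ← fromBlocks_one] at htU1
  obtain ⟨htU₁₁, -, -, -⟩ := fromBlocks_inj.mp htU1
  have htV1 := htV.1
  rw [conjTranspose_fromCols_eq_fromRows_conjTranspose, fromRows_mul_fromCols,
    ← fromBlocks_one] at htV1
  obtain ⟨htV₁₁, -, -, htV₂₂⟩ := fromBlocks_inj.mp htV1
  have htV2 := htV.2
  rw [conjTranspose_fromCols_eq_fromRows_conjTranspose, fromCols_mul_fromRows] at htV2
  -- diagonal cancellations
  have hD : diagonal (fun i => (σ i : ℂ)) * diagonal (fun i => ((σ i : ℂ))⁻¹) = 1 := by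
    rw [diagonal_mul_diagonal,
      show (fun i => (σ i : ℂ) * ((σ i : ℂ))⁻¹) = fun _ => 1 from
        funext fun i => mul_inv_cancel₀ (Complex.ofReal_ne_zero.mpr (hσpos i).ne'),
      diagonal_one]
  have hD' : diagonal (fun i => ((σ i : ℂ))⁻¹) * diagonal (fun i => (σ i : ℂ)) = 1 := by
    rw [diagonal_mul_diagonal,
      show (fun i => ((σ i : ℂ))⁻¹ * (σ i : ℂ)) = fun _ => 1 from
        funext fun i => inv_mul_cancel₀ (Complex.ofReal_ne_zero.mpr (hσpos i).ne'),
      diagonal_one]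
  have hT : diagonal (fun i => (τ i : ℂ)) * diagonal (fun i => ((τ i : ℂ))⁻¹) = 1 := by
    rw [diagonal_mul_diagonal,
      show (fun i => (τ i : ℂ) * ((τ i : ℂ))⁻¹) = fun _ => 1 from
        funext fun i => mul_inv_cancel₀ (Complex.ofReal_ne_zero.mpr (hτpos i).ne'),
      diagonal_one]
  have hT' : diagonal (fun i => ((τ i : ℂ))⁻¹) * diagonal (fun i => (τ i : ℂ)) = 1 := by
    rw [diagonal_mul_diagonal,
      show (fun i => ((τ i : ℂ))⁻¹ * (τ i : ℂ)) = fun _ => 1 from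
        funext fun i => inv_mul_cancel₀ (Complex.ofReal_ne_zero.mpr (hτpos i).ne'),
      diagonal_one]
  -- core products
  have hAAd : A * Adag = U₁ * U₁ᴴ := by
    rw [hAsvd, hAdag]; simp only [Matrix.mul_assoc]
    rw [cancel_left hV₁₁, cancel_left hD]
  have hAdA : Adag * A = V₁ * V₁ᴴ := by
    rw [hAsvd, hAdag]; simp only [Matrix.mul_assoc]
    rw [cancel_left hU₁₁, cancel_left hD']
  have hBBd : B * Bdag = tU₁ * tU₁ᴴ := by
    rw [hBsvd, hBdag]; simp only [Matrix.mul_assoc]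
    rw [cancel_left htV₁₁, cancel_left hT]
  have hBdB : Bdag * B = tV₁ * tV₁ᴴ := by
    rw [hBsvd, hBdag]; simp only [Matrix.mul_assoc]
    rw [cancel_left htU₁₁, cancel_left hT']
  have hUUA : U₁ * U₁ᴴ * A = A := by
    rw [hAsvd]; simp only [Matrix.mul_assoc]
    rw [cancel_left hU₁₁]
  have hAAdA : A * Adag * A = A := by
    rw [Matrix.mul_assoc, hAdA, hAsvd]; simp only [Matrix.mul_assoc]
    rw [cancel_left hV₁₁]
  have hBBdB₁ : B * (Bdag * B) = B := by
    rw [hBdB, hBsvd]; simp only [Matrix.mul_assoc]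
    rw [cancel_left htV₁₁]
  have hBBdB₂ : B * Bdag * B = B := by
    rw [Matrix.mul_assoc, hBBdB₁]
  constructor
  · -- first identity
    have hPH : (A * Adag)ᴴ = A * Adag := by
      rw [hAAd, conjTranspose_mul, conjTranspose_conjTranspose]
    have hP2 : (A * Adag) * (A * Adag) = A * Adag := by
      rw [← Matrix.mul_assoc, hAAdA]
    have hgoal2 : A * Adag * E * Bdag = (A * Adag) * (E * Bdag) := by
      rw [Matrix.mul_assoc]
    rw [hgoal2, ← frobSq_proj_sub (A * Adag) (E * Bdag) hPH hP2]
    have key : E * Bdag - (A * Adag) * (E * Bdag)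
        = U₂ * ((U₂ᴴ * tU₁) * tU₁ᴴ) := by
      have e1 : E * Bdag = tU₁ * tU₁ᴴ - A * Bdag := by
        rw [hE, Matrix.sub_mul, hBBd]
      have e2 : (A * Adag) * (E * Bdag) = U₁ * U₁ᴴ * (tU₁ * tU₁ᴴ) - A * Bdag := by
        rw [e1, Matrix.mul_sub, hAAd]
        congr 1
        rw [← Matrix.mul_assoc, hUUA]
      rw [e2, e1, sub_sub_sub_cancel_right]
      have h1sub : (1 : Matrix (Fin m) (Fin m) ℂ) - U₁ * U₁ᴴ = U₂ * U₂ᴴ := by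
        rw [← hU2]; abel
      calc tU₁ * tU₁ᴴ - U₁ * U₁ᴴ * (tU₁ * tU₁ᴴ)
          = (1 - U₁ * U₁ᴴ) * (tU₁ * tU₁ᴴ) := by
            rw [Matrix.sub_mul, Matrix.one_mul]
        _ = U₂ * ((U₂ᴴ * tU₁) * tU₁ᴴ) := by
            rw [h1sub]; simp only [Matrix.mul_assoc]
    rw [key, frobSq_special U₂ (U₂ᴴ * tU₁) tU₁ hU₂₂ htU₁₁,
      show U₂ᴴ * tU₁ = (tU₁ᴴ * U₂)ᴴ by simp [conjTranspose_mul], frobSq_conjT]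
  · -- second identity
    have hQH : (Bdag * B)ᴴ = Bdag * B := by
      rw [hBdB, conjTranspose_mul, conjTranspose_conjTranspose]
    have hQ2 : (Bdag * B) * (Bdag * B) = Bdag * B := by
      rw [← Matrix.mul_assoc, Matrix.mul_assoc Bdag B Bdag, Matrix.mul_assoc Bdag _ B,
        hBBdB₂]
    have hgoal2 : Adag * E * Bdag * B = (Adag * E) * (Bdag * B) := by
      rw [Matrix.mul_assoc]
    rw [hgoal2, ← frobSq_proj_sub' (Bdag * B) (Adag * E) hQH hQ2]
    have key : Adag * E - (Adag * E) * (Bdag * B)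
        = -(V₁ * ((V₁ᴴ * tV₂) * tV₂ᴴ)) := by
      have e1 : Adag * E = Adag * B - V₁ * V₁ᴴ := by
        rw [hE, Matrix.mul_sub, hAdA]
      have e2 : (Adag * E) * (Bdag * B) = Adag * B - V₁ * V₁ᴴ * (tV₁ * tV₁ᴴ) := by
        rw [e1, Matrix.sub_mul, Matrix.mul_assoc Adag B, hBBdB₁, hBdB]
      rw [e2, e1]
      have h1sub : (1 : Matrix (Fin n) (Fin n) ℂ) - tV₁ * tV₁ᴴ = tV₂ * tV₂ᴴ := by
        rw [← htV2]; abel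
      have step : Adag * B - V₁ * V₁ᴴ - (Adag * B - V₁ * V₁ᴴ * (tV₁ * tV₁ᴴ))
          = -(V₁ * V₁ᴴ * (1 - tV₁ * tV₁ᴴ)) := by
        rw [Matrix.mul_sub, Matrix.mul_one]; abel
      rw [step, h1sub]
      congr 1
      simp only [Matrix.mul_assoc]
    rw [key, frobSq_neg, frobSq_special V₁ (V₁ᴴ * tV₂) tV₂ hV₁₁ htV₂₂,
      show V₁ᴴ * tV₂ = (tV₂ᴴ * V₁)ᴴ by simp [conjTranspose_mul], frobSq_conjT]
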